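/- Upper bound of Theorem 3.1: Let (f_1,…,f_n) be a profile of piecewise constant value density functions on [0,1] and let f_1' be any piecewise constant density with positive total value. Let A be a complete allocation maximizing the Nash product ∏_{i=1}^n v_i(A_i) over complete allocations with respect to (f_1,…,f_n), and let A' be a complete allocation maximizing (∫_{A_1'} f_1'(x) dx) · ∏_{j=2}^n v_j(A_j') over complete allocations (i.e., A' is MNW with respect to the profile (f_1', f_2,…,f_n)). Then v_1(A_1') ≤ 2 · v_1(A_1). Consequently, the incentive ratio of the Maximum Nash Welfare mechanism without free disposal is at most 2. -/

import Mathlib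

open MeasureTheory Set

noncomputable def cakeval (f : ℝ → ℝ) (S : Set ℝ) : ℝ := ∫ x in S, f x

def PiecewiseConstant (f : ℝ → ℝ) : Prop :=
  ∃ (m : ℕ) (a : Fin (m + 1) → ℝ) (c : Fin m → ℝ),
    a 0 = 0 ∧ a (Fin.last m) = 1 ∧ Monotone a ∧
    ∀ t : Fin m, ∀ x ∈ Set.Ico (a t.castSucc) (a t.succ), f x = c t

def ValidDensity (f : ℝ → ℝ) : Prop :=
  PiecewiseConstant f ∧ (∀ x, 0 ≤ f x) ∧ 0 < cakeval f (Set.Icc 0 1)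

def FinUnionIcc (S : Set ℝ) : Prop :=
  ∃ (k : ℕ) (a b : Fin k → ℝ), S = ⋃ j, Set.Icc (a j) (b j)

def IsAllocOn {n : ℕ} (C : Set ℝ) (A : Fin n → Set ℝ) : Prop :=
  (∀ i, A i ⊆ C) ∧ (∀ i, FinUnionIcc (A i)) ∧
    Pairwise fun i j => volume (A i ∩ A j) = 0

def IsAlloc {n : ℕ} (A : Fin n → Set ℝ) : Prop := IsAllocOn (Set.Icc 0 1) A

def CompleteAlloc {n : ℕ} (A : Fin n → Set ℝ) : Prop := (⋃ i, A i) = Set.Icc (0 : ℝ) 1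

noncomputable def nashProd {n : ℕ} (f : Fin n → ℝ → ℝ) (A : Fin n → Set ℝ) : ℝ :=
  ∏ i, cakeval (f i) (A i)

def IsMNWOn {n : ℕ} (C : Set ℝ) (f : Fin n → ℝ → ℝ) (A : Fin n → Set ℝ) : Prop :=
  IsAllocOn C A ∧ ∀ B : Fin n → Set ℝ, IsAllocOn C B → nashProd f B ≤ nashProd f A

def IsMNW {n : ℕ} (f : Fin n → ℝ → ℝ) (A : Fin n → Set ℝ) : Prop :=
  IsMNWOn (Set.Icc 0 1) f A

def IsCompleteMNW {n : ℕ} (f : Fin n → ℝ → ℝ) (A : Fin n → Set ℝ) : Prop :=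
  IsAlloc A ∧ CompleteAlloc A ∧
    ∀ B : Fin n → Set ℝ, IsAlloc B → CompleteAlloc B → nashProd f B ≤ nashProd f A


/-- For a monotone partition, every point below the top lies in some half-open cell. -/
lemma exists_cell {m : ℕ} {a : Fin (m+1) → ℝ} (ha : Monotone a)
    {x : ℝ} (hx0 : a 0 ≤ x) (hx1 : x < a (Fin.last m)) :
    ∃ t : Fin m, a t.castSucc ≤ x ∧ x < a t.succ := by
  classical
  set s : Finset (Fin (m+1)) := Finset.univ.filter (fun j => a j ≤ x) with hs
  have hne : s.Nonempty := ⟨0, by simp [hs, hx0]⟩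
  set j := s.max' hne with hj
  have hjmem : j ∈ s := s.max'_mem hne
  have hjle : a j ≤ x := by simpa [hs] using hjmem
  have hjne : j ≠ Fin.last m := by
    intro hEq; rw [hEq] at hjle; exact absurd hjle (not_le.2 hx1)
  refine ⟨j.castPred hjne, ?_, ?_⟩
  · simpa using hjle
  · by_contra h
    push_neg at h
    have hmem : (j.castPred hjne).succ ∈ s := by simp [hs, h]
    have := s.le_max' _ hmem
    rw [← hj] at this
    have h2 : j < (j.castPred hjne).succ := by
      conv_lhs => rw [← Fin.castSucc_castPred j hjne]
      exact Fin.castSucc_lt_succ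
    exact absurd this (not_le.2 h2)

/-- A monotone partition's cells cover the whole interval. -/
lemma iUnion_cells {m : ℕ} (hm : 0 < m) {a : Fin (m+1) → ℝ} (ha : Monotone a) :
    (⋃ k : Fin m, Icc (a k.castSucc) (a k.succ)) = Icc (a 0) (a (Fin.last m)) := by
  apply Subset.antisymm
  · refine iUnion_subset fun k => ?_
    exact Icc_subset_Icc (ha (Fin.zero_le _)) (ha (Fin.le_last _))
  · rintro x ⟨hx0, hx1⟩
    rcases eq_or_lt_of_le hx1 with h | h
    · have hk : (⟨m-1, by omega⟩ : Fin m).succ = Fin.last m := by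
        ext; simp; omega
      exact mem_iUnion.2 ⟨⟨m-1, by omega⟩, by
        rw [hk]; exact ⟨by rw [h]; exact ha (Fin.le_last _), hx1⟩⟩
    · obtain ⟨t, h1, h2⟩ := exists_cell ha hx0 h
      exact mem_iUnion.2 ⟨t, h1, h2.le⟩

/-- Extract a strictly monotone enumeration of a finite grid containing 0 and 1. -/
lemma grid_exists (G : Finset ℝ) (h0 : (0:ℝ) ∈ G) (h1 : (1:ℝ) ∈ G)
    (hsub : ∀ g ∈ G, g ∈ Icc (0:ℝ) 1) :
    ∃ (M : ℕ) (q : Fin (M+1) → ℝ), 0 < M ∧ StrictMono q ∧ q 0 = 0 ∧ q (Fin.last M) = 1 ∧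
      (∀ j, q j ∈ G) ∧ (∀ g ∈ G, ∀ k : Fin M, g ∉ Ioo (q k.castSucc) (q k.succ)) := by
  classical
  have hcard : 0 < G.card := Finset.card_pos.2 ⟨0, h0⟩
  obtain ⟨M, hM⟩ : ∃ M, G.card = M + 1 := ⟨G.card - 1, by omega⟩
  set e := G.orderIsoOfFin hM with he
  set q : Fin (M+1) → ℝ := fun j => (e j : ℝ) with hq
  have hmono : StrictMono q := fun i j hij => by
    exact_mod_cast e.strictMono hij
  have hmem : ∀ j, q j ∈ G := fun j => (e j).2
  have hsurj : ∀ g ∈ G, ∃ j, q j = g := fun g hg => ⟨e.symm ⟨g, hg⟩, by simp [hq]⟩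
  have hq0 : q 0 = 0 := by
    obtain ⟨j, hj⟩ := hsurj 0 h0
    have h1' : q 0 ≤ q j := hmono.monotone (Fin.zero_le j)
    have h2' : (0:ℝ) ≤ q 0 := (hsub _ (hmem 0)).1
    rw [hj] at h1'; linarith
  have hq1 : q (Fin.last M) = 1 := by
    obtain ⟨j, hj⟩ := hsurj 1 h1
    have h1' : q j ≤ q (Fin.last M) := hmono.monotone (Fin.le_last j)
    have h2' : q (Fin.last M) ≤ 1 := (hsub _ (hmem _)).2
    rw [hj] at h1'; linarith
  have hMpos : 0 < M := by
    rcases Nat.eq_zero_or_pos M with h | h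
    · subst h
      have : q 0 = q (Fin.last 0) := by congr
      rw [hq0, hq1] at this; norm_num at this
    · exact h
  refine ⟨M, q, hMpos, hmono, hq0, hq1, hmem, ?_⟩
  rintro g hg k ⟨hg1, hg2⟩
  obtain ⟨j, rfl⟩ := hsurj g hg
  have hj1 : k.castSucc < j := hmono.lt_iff_lt.1 hg1
  have hj2 : k.succ ≤ j := Fin.castSucc_lt_iff_succ_le.1 hj1
  exact absurd hg2 (not_lt.2 (hmono.monotone hj2))


lemma null_Icc_inter {a b c d : ℝ} (h : b ≤ c) : volume (Icc a b ∩ Icc c d) = 0 := by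
  have hsub : Icc a b ∩ Icc c d ⊆ Icc c b := fun x hx => ⟨hx.2.1, hx.1.2⟩
  refine measure_mono_null hsub ?_
  rw [Real.volume_Icc]
  simp [ENNReal.ofReal_eq_zero]; linarith

lemma setIntegral_null {f : ℝ → ℝ} {s : Set ℝ} (h : volume s = 0) :
    ∫ x in s, f x = 0 := by
  rw [Measure.restrict_eq_zero.2 h, integral_zero_measure]

/-- Integral of a function constant on the open core of a sandwiched set. -/
lemma integral_const_between {f : ℝ → ℝ} {c a b : ℝ} {T : Set ℝ} (hab : a ≤ b)
    (hsub : Ioo a b ⊆ T) (hsup : T ⊆ Icc a b) (hc : ∀ x ∈ Ioo a b, f x = c) :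
    ∫ x in T, f x = c * (b - a) := by
  have hae : T =ᵐ[volume] Ioo a b := by
    rw [MeasureTheory.ae_eq_set]
    constructor
    · refine measure_mono_null (fun x hx => ?_) (?_ : volume ({a, b} : Set ℝ) = 0)
      · obtain ⟨hxT, hxI⟩ := hx
        have := hsup hxT
        rcases eq_or_lt_of_le this.1 with h1 | h1
        · exact Or.inl h1.symm
        rcases eq_or_lt_of_le this.2 with h2 | h2
        · exact Or.inr h2
        exact absurd ⟨h1, h2⟩ hxI
      · have : ({a, b} : Set ℝ) = {a} ∪ {b} := rfl
        rw [this]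
        exact measure_union_null Real.volume_singleton Real.volume_singleton
    · exact measure_mono_null (fun x hx => (hx.2 (hsub hx.1)).elim) measure_empty
  rw [setIntegral_congr_set hae, setIntegral_congr_fun measurableSet_Ioo hc,
    setIntegral_const, Real.volume_real_Ioo_of_le hab, smul_eq_mul,
    mul_comm]

lemma pc_integrableOn {f : ℝ → ℝ} (hf : PiecewiseConstant f) {S : Set ℝ}
    (hS : S ⊆ Icc 0 1) : IntegrableOn f S volume := by
  obtain ⟨m, a, c, ha0, ha1, hmono, hstep⟩ := hf
  have hbig : IntegrableOn f ((⋃ t : Fin m, Ico (a t.castSucc) (a t.succ)) ∪ {1}) volume := by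
    refine IntegrableOn.union ?_ ?_
    · rw [integrableOn_finite_iUnion]
      intro t
      refine IntegrableOn.congr_fun (f := fun _ => c t) ?_ ?_ measurableSet_Ico
      · refine integrableOn_const ?_
        rw [Real.volume_Ico]; exact ENNReal.ofReal_ne_top
      · intro x hx; exact (hstep t x hx).symm
    · exact (integrableOn_singleton_iff (by simp)).2 (Or.inr (by simp [Real.volume_singleton]))
  refine hbig.mono_set fun x hx => ?_
  have hx' := hS hx
  rcases eq_or_lt_of_le hx'.2 with h | h
  · exact Or.inr (by simp [h])
  · obtain ⟨t, h1, h2⟩ := exists_cell hmono (ha0 ▸ hx'.1) (ha1 ▸ h)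
    exact Or.inl (mem_iUnion.2 ⟨t, h1, h2⟩)

lemma sum_cells {M : ℕ} {q : Fin (M+1) → ℝ} (hmono : StrictMono q)
    (hq0 : q 0 = 0) (hq1 : q (Fin.last M) = 1)
    {f : ℝ → ℝ} {S : Set ℝ} (hSm : MeasurableSet S) (hS : S ⊆ Icc 0 1)
    (hint : IntegrableOn f S volume) :
    ∫ x in S, f x = ∑ k : Fin M, ∫ x in S ∩ Ico (q k.castSucc) (q k.succ), f x := by
  classical
  have hae : S =ᵐ[volume] ⋃ k ∈ Finset.univ, S ∩ Ico (q (k:Fin M).castSucc) (q k.succ) := by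
    rw [MeasureTheory.ae_eq_set]
    constructor
    · refine measure_mono_null (fun x hx => ?_) (Real.volume_singleton (a := 1))
      obtain ⟨hxS, hxU⟩ := hx
      have hx' := hS hxS
      rcases eq_or_lt_of_le hx'.2 with h | h
      · exact h
      · obtain ⟨t, h1, h2⟩ := exists_cell hmono.monotone (hq0 ▸ hx'.1) (hq1 ▸ h)
        exact absurd (mem_iUnion.2 ⟨t, by simp [hxS, h1, h2]⟩) hxU
    · refine measure_mono_null (fun x hx => ?_) (measure_empty)
      simp only [mem_diff, mem_iUnion] at hx
      obtain ⟨⟨k, _, hk⟩, hnS⟩ := hx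
      exact absurd hk.1 hnS
  rw [setIntegral_congr_set hae]
  refine integral_biUnion_finset Finset.univ (fun k _ => hSm.inter measurableSet_Ico) ?_
    (fun k _ => hint.mono_set inter_subset_left)
  intro i _ j _ hij
  have hdis : ∀ i j : Fin M, i < j →
      Disjoint (S ∩ Ico (q i.castSucc) (q i.succ)) (S ∩ Ico (q j.castSucc) (q j.succ)) := by
    intro i j hlt
    have hle : q i.succ ≤ q j.castSucc := hmono.monotone (by
      rw [Fin.le_def]
      simp only [Fin.val_succ, Fin.coe_castSucc]
      exact hlt)
    refine Set.disjoint_left.2 fun x hx1 hx2 => ?_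
    exact absurd hx2.2.1 (not_le.2 (lt_of_lt_of_le hx1.2.2 hle))
  rcases lt_or_gt_of_ne hij with h | h
  · exact hdis i j h
  · exact (hdis j i h).symm
lemma finUnionIcc_measurable {S : Set ℝ} (h : FinUnionIcc S) : MeasurableSet S := by
  obtain ⟨k, a, b, rfl⟩ := h
  exact MeasurableSet.iUnion fun j => measurableSet_Icc

lemma cakeval_nonneg {f : ℝ → ℝ} (hf : ∀ x, 0 ≤ f x) {S : Set ℝ}
    (hS : MeasurableSet S) : 0 ≤ cakeval f S :=
  setIntegral_nonneg hS fun x _ => hf x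

/-- A piecewise constant function is constant on any interval avoiding its breakpoints. -/
lemma pc_exists_finset {f : ℝ → ℝ} (hf : PiecewiseConstant f) :
    ∃ E : Finset ℝ, ∀ p r : ℝ, 0 ≤ p → p < r → r ≤ 1 →
      (∀ e ∈ E, e ∉ Ioo p r) → ∃ c, ∀ x ∈ Ico p r, f x = c := by
  classical
  obtain ⟨m, a, c, ha0, ha1, hmono, hstep⟩ := hf
  refine ⟨Finset.univ.image a, fun p r hp hpr hr hE => ?_⟩
  obtain ⟨t, h1, h2⟩ := exists_cell hmono (ha0 ▸ hp) (ha1 ▸ lt_of_lt_of_le hpr hr)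
  have hra : r ≤ a t.succ := by
    by_contra h
    push_neg at h
    refine hE (a t.succ) (Finset.mem_image_of_mem a (Finset.mem_univ _)) ⟨h2, h⟩
  exact ⟨c t, fun x hx => hstep t x ⟨le_trans h1 hx.1, lt_of_lt_of_le hx.2 hra⟩⟩

/-- A finite union of closed intervals either contains or misses any interval
avoiding its endpoints. -/
lemma finunion_exists_finset {S : Set ℝ} (h : FinUnionIcc S) :
    ∃ E : Finset ℝ, ∀ p r : ℝ, p < r → (∀ e ∈ E, e ∉ Ioo p r) →
      Ioo p r ⊆ S ∨ S ∩ Ioo p r = ∅ := by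
  classical
  obtain ⟨k, a, b, rfl⟩ := h
  refine ⟨Finset.univ.image a ∪ Finset.univ.image b, fun p r hpr hE => ?_⟩
  by_cases hcase : ∃ j, a j ≤ p ∧ r ≤ b j
  · obtain ⟨j, hj1, hj2⟩ := hcase
    exact Or.inl fun x hx => mem_iUnion.2 ⟨j, le_trans hj1 hx.1.le, le_trans hx.2.le hj2⟩
  · push_neg at hcase
    refine Or.inr (eq_empty_iff_forall_notMem.2 fun x hx => ?_)
    obtain ⟨hxS, hxI⟩ := hx
    obtain ⟨j, hja, hjb⟩ := mem_iUnion.1 hxS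
    have haj : a j ≤ p := by
      by_contra hh
      push_neg at hh
      exact hE (a j) (Finset.mem_union_left _ (Finset.mem_image_of_mem a (Finset.mem_univ _)))
        ⟨hh, lt_of_le_of_lt hja hxI.2⟩
    have hbj : b j < r := hcase j haj
    have hbp : b j ≤ p := by
      by_contra hh
      push_neg at hh
      exact hE (b j) (Finset.mem_union_right _ (Finset.mem_image_of_mem b (Finset.mem_univ _)))
        ⟨hh, hbj⟩
    exact absurd hxI.1 (not_lt.2 (le_trans hjb hbp))
lemma finUnionIcc_of_fintype {ι : Type} [Fintype ι] (a b : ι → ℝ) :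
    FinUnionIcc (⋃ p, Icc (a p) (b p)) := by
  classical
  let e := Fintype.equivFin ι
  exact ⟨Fintype.card ι, a ∘ e.symm, b ∘ e.symm,
    (e.symm.surjective.iUnion_comp fun p => Icc (a p) (b p)).symm⟩

lemma alloc_value {N M : ℕ} {q : Fin (M+1) → ℝ} (hmono : StrictMono q)
    (hq0 : q 0 = 0) (hq1 : q (Fin.last M) = 1)
    {f : ℝ → ℝ} (hf : PiecewiseConstant f) {c : Fin M → ℝ}
    (hc : ∀ k : Fin M, ∀ x ∈ Ico (q k.castSucc) (q k.succ), f x = c k)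
    {A : Fin N → Set ℝ} (hmeas : ∀ i, MeasurableSet (A i))
    (hsub : ∀ i, A i ⊆ Icc 0 1)
    (hpair : Pairwise fun i j => volume (A i ∩ A j) = 0)
    {o : Fin M → Fin N} (ho : ∀ k, Ioo (q k.castSucc) (q k.succ) ⊆ A (o k)) (i : Fin N) :
    cakeval f (A i) = ∑ k : Fin M, if o k = i then c k * (q k.succ - q k.castSucc) else 0 := by
  classical
  rw [cakeval, sum_cells hmono hq0 hq1 (hmeas i) (hsub i) (pc_integrableOn hf (hsub i))]
  refine Finset.sum_congr rfl fun k _ => ?_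
  set p := q k.castSucc
  set r := q k.succ
  have hpr : p < r := hmono (Fin.castSucc_lt_succ (i := k))
  by_cases h : o k = i
  · rw [if_pos h]
    refine integral_const_between hpr.le ?_ ?_ (fun x hx => hc k x (Ioo_subset_Ico_self hx))
    · exact fun x hx => ⟨h ▸ ho k hx, Ioo_subset_Ico_self hx⟩
    · exact fun x hx => Icc_subset_Icc_right (le_refl r) (Ico_subset_Icc_self hx.2)
  · rw [if_neg h]
    apply setIntegral_null
    have h0 : volume (A i ∩ A (o k)) = 0 := hpair fun hh => h hh.symm
    have hsub2 : A i ∩ Ico p r ⊆ {p} ∪ (A i ∩ A (o k)) := by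
      intro x hx
      rcases eq_or_lt_of_le hx.2.1 with hh | hh
      · exact Or.inl hh.symm
      · exact Or.inr ⟨hx.1, ho k ⟨hh, hx.2.2⟩⟩
    exact measure_mono_null hsub2 (measure_union_null Real.volume_singleton h0)
lemma fin_succ_le_castSucc {M : ℕ} {k k' : Fin M} (h : k < k') :
    (k.succ : Fin (M+1)) ≤ k'.castSucc := by
  rw [Fin.le_def]
  simp only [Fin.val_succ, Fin.coe_castSucc]
  exact h

lemma exists_interpolation {N : ℕ} {f : Fin N → ℝ → ℝ}
    (hf : ∀ i, PiecewiseConstant (f i))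
    {A B : Fin N → Set ℝ} (hA : IsAlloc A) (hAc : CompleteAlloc A)
    (hB : IsAlloc B) (hBc : CompleteAlloc B) {t : ℝ} (ht0 : 0 ≤ t) (ht1 : t ≤ 1) :
    ∃ C : Fin N → Set ℝ, IsAlloc C ∧ CompleteAlloc C ∧
      ∀ i, cakeval (f i) (C i) =
        (1-t) * cakeval (f i) (A i) + t * cakeval (f i) (B i) := by
  classical
  obtain ⟨hAsub, hAfin, hApair⟩ := hA
  obtain ⟨hBsub, hBfin, hBpair⟩ := hB
  choose EA hEA using fun i => finunion_exists_finset (hAfin i)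
  choose EB hEB using fun i => finunion_exists_finset (hBfin i)
  choose Ef hEf using fun i => pc_exists_finset (hf i)
  set G : Finset ℝ := insert 0 (insert 1
    ((Finset.univ.biUnion fun i => EA i ∪ EB i ∪ Ef i).filter
      (fun x => x ∈ Icc (0:ℝ) 1))) with hG
  have h0G : (0:ℝ) ∈ G := Finset.mem_insert_self _ _
  have h1G : (1:ℝ) ∈ G := Finset.mem_insert_of_mem (Finset.mem_insert_self _ _)
  have hGsub : ∀ g ∈ G, g ∈ Icc (0:ℝ) 1 := by
    intro g hg
    rw [hG] at hg
    rcases Finset.mem_insert.1 hg with rfl | hg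
    · exact ⟨le_refl 0, zero_le_one⟩
    rcases Finset.mem_insert.1 hg with rfl | hg
    · exact ⟨zero_le_one, le_refl 1⟩
    · exact (Finset.mem_filter.1 hg).2
  obtain ⟨M, q, hM, hmono, hq0, hq1, hqmem, hqavoid⟩ := grid_exists G h0G h1G hGsub
  have hq01 : ∀ j, q j ∈ Icc (0:ℝ) 1 := fun j => hGsub _ (hqmem j)
  have hcell : ∀ k : Fin M, q k.castSucc < q k.succ := fun k => hmono (Fin.castSucc_lt_succ (i := k))
  have hEavoid : ∀ i (k : Fin M), ∀ e ∈ EA i ∪ EB i ∪ Ef i,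
      e ∉ Ioo (q k.castSucc) (q k.succ) := by
    intro i k e he hmem
    have he01 : e ∈ Icc (0:ℝ) 1 :=
      ⟨le_trans (hq01 k.castSucc).1 hmem.1.le, le_trans hmem.2.le (hq01 k.succ).2⟩
    have heG : e ∈ G := by
      rw [hG]
      refine Finset.mem_insert_of_mem (Finset.mem_insert_of_mem ?_)
      exact Finset.mem_filter.2 ⟨Finset.mem_biUnion.2 ⟨i, Finset.mem_univ i, he⟩, he01⟩
    exact hqavoid e heG k hmem
  have hconst : ∀ i (k : Fin M), ∃ cc, ∀ x ∈ Ico (q k.castSucc) (q k.succ), f i x = cc :=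
    fun i k => hEf i _ _ (hq01 k.castSucc).1 (hcell k) (hq01 k.succ).2
      (fun e he => hEavoid i k e (Finset.mem_union_right _ he))
  choose c hc using hconst
  have halignA : ∀ i (k : Fin M),
      Ioo (q k.castSucc) (q k.succ) ⊆ A i ∨ A i ∩ Ioo (q k.castSucc) (q k.succ) = ∅ :=
    fun i k => hEA i _ _ (hcell k)
      (fun e he => hEavoid i k e (Finset.mem_union_left _ (Finset.mem_union_left _ he)))
  have halignB : ∀ i (k : Fin M),
      Ioo (q k.castSucc) (q k.succ) ⊆ B i ∨ B i ∩ Ioo (q k.castSucc) (q k.succ) = ∅ :=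
    fun i k => hEB i _ _ (hcell k)
      (fun e he => hEavoid i k e (Finset.mem_union_left _ (Finset.mem_union_right _ he)))
  have hmid : ∀ k : Fin M, (q k.castSucc + q k.succ)/2 ∈ Ioo (q k.castSucc) (q k.succ) := by
    intro k
    have := hcell k
    constructor <;> [linarith; linarith]
  have hownA : ∀ k : Fin M, ∃ i, Ioo (q k.castSucc) (q k.succ) ⊆ A i := by
    intro k
    have hm01 : (q k.castSucc + q k.succ)/2 ∈ Icc (0:ℝ) 1 := by
      have h1 := hq01 k.castSucc; have h2 := hq01 k.succ; have := hmid k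
      exact ⟨le_trans h1.1 (hmid k).1.le, le_trans (hmid k).2.le h2.2⟩
    rw [← hAc] at hm01
    obtain ⟨i, hi⟩ := mem_iUnion.1 hm01
    rcases halignA i k with h | h
    · exact ⟨i, h⟩
    · exact absurd (mem_inter hi (hmid k)) (by rw [h]; exact fun hx => hx)
  have hownB : ∀ k : Fin M, ∃ i, Ioo (q k.castSucc) (q k.succ) ⊆ B i := by
    intro k
    have hm01 : (q k.castSucc + q k.succ)/2 ∈ Icc (0:ℝ) 1 := by
      have h1 := hq01 k.castSucc; have h2 := hq01 k.succ
      exact ⟨le_trans h1.1 (hmid k).1.le, le_trans (hmid k).2.le h2.2⟩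
    rw [← hBc] at hm01
    obtain ⟨i, hi⟩ := mem_iUnion.1 hm01
    rcases halignB i k with h | h
    · exact ⟨i, h⟩
    · exact absurd (mem_inter hi (hmid k)) (by rw [h]; exact fun hx => hx)
  choose oA hoA using hownA
  choose oB hoB using hownB
  set r : Fin M → ℝ := fun k => q k.castSucc + (1-t) * (q k.succ - q k.castSucc) with hrdef
  have hrlow : ∀ k, q k.castSucc ≤ r k := by
    intro k; simp only [hrdef]; have := hcell k; nlinarith
  have hrhigh : ∀ k, r k ≤ q k.succ := by
    intro k; simp only [hrdef]; have := hcell k; nlinarith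
  -- pieces
  set ow : Fin M × Bool → Fin N := fun z => if z.2 then oA z.1 else oB z.1 with how
  set lep : Fin M × Bool → ℝ := fun z => if z.2 then q z.1.castSucc else r z.1 with hlep
  set rep : Fin M × Bool → ℝ := fun z => if z.2 then r z.1 else q z.1.succ with hrep
  have hlr : ∀ z, q z.1.castSucc ≤ lep z ∧ lep z ≤ rep z ∧ rep z ≤ q z.1.succ := by
    rintro ⟨k, b⟩
    cases b
    · simp only [hlep, hrep, Bool.false_eq_true, if_false]
      exact ⟨hrlow k, hrhigh k, le_refl _⟩
    · simp only [hlep, hrep, if_true]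
      exact ⟨le_refl _, hrlow k, hrhigh k⟩
  set aa : Fin N → Fin M × Bool → ℝ := fun i z => if ow z = i then lep z else 1 with haa
  set bb : Fin N → Fin M × Bool → ℝ := fun i z => if ow z = i then rep z else 0 with hbb
  set C : Fin N → Set ℝ := fun i => ⋃ z : Fin M × Bool, Icc (aa i z) (bb i z) with hCdef
  have hpiece : ∀ i z, Icc (aa i z) (bb i z) =
      if ow z = i then Icc (lep z) (rep z) else (∅ : Set ℝ) := by
    intro i z
    by_cases h : ow z = i <;> simp [haa, hbb, h, Set.Icc_eq_empty (by norm_num : ¬(1:ℝ) ≤ 0)]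
  have hpsubcell : ∀ i z, Icc (aa i z) (bb i z) ⊆ Icc (q z.1.castSucc) (q z.1.succ) := by
    intro i z
    rw [hpiece]
    by_cases h : ow z = i <;> simp [h]
    exact Icc_subset_Icc (hlr z).1 (hlr z).2.2
  have hCsub : ∀ i, C i ⊆ Icc (0:ℝ) 1 := by
    intro i
    rw [hCdef]
    refine iUnion_subset fun z => (hpsubcell i z).trans (Icc_subset_Icc (hq01 _).1 (hq01 _).2)
  have hCmeas : ∀ i, MeasurableSet (C i) := fun i =>
    MeasurableSet.iUnion fun z => measurableSet_Icc
  have hcellnull : ∀ k k' : Fin M, k ≠ k' →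
      volume (Icc (q k.castSucc) (q k.succ) ∩ Icc (q k'.castSucc) (q k'.succ)) = 0 := by
    intro k k' hkk
    rcases lt_or_gt_of_ne hkk with h | h
    · exact null_Icc_inter (hmono.monotone (fin_succ_le_castSucc h))
    · rw [inter_comm]
      exact null_Icc_inter (hmono.monotone (fin_succ_le_castSucc h))
  have hCpair : Pairwise fun i j => volume (C i ∩ C j) = 0 := by
    intro i j hij
    have hsubU : C i ∩ C j ⊆ ⋃ zz : (Fin M × Bool) × (Fin M × Bool),
        Icc (aa i zz.1) (bb i zz.1) ∩ Icc (aa j zz.2) (bb j zz.2) := by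
      rintro x ⟨hxi, hxj⟩
      rw [hCdef] at hxi hxj
      obtain ⟨z1, hz1⟩ := mem_iUnion.1 hxi
      obtain ⟨z2, hz2⟩ := mem_iUnion.1 hxj
      exact mem_iUnion.2 ⟨(z1, z2), hz1, hz2⟩
    refine measure_mono_null hsubU (measure_iUnion_null fun zz => ?_)
    obtain ⟨z1, z2⟩ := zz
    by_cases h1 : ow z1 = i
    swap
    · rw [hpiece, if_neg h1]; simp
    by_cases h2 : ow z2 = j
    swap
    · rw [hpiece i z1, hpiece j z2, if_neg h2]; simp
    by_cases hk : z1.1 = z2.1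
    · -- same cell, so different bools
      have hbne : z1.2 ≠ z2.2 := by
        intro hb
        have : z1 = z2 := Prod.ext hk hb
        rw [this, h2] at h1
        exact hij h1.symm
      have hs1 : Icc (aa i z1) (bb i z1) ⊆ Icc (lep z1) (rep z1) := by
        rw [hpiece, if_pos h1]
      have hs2 : Icc (aa j z2) (bb j z2) ⊆ Icc (lep z2) (rep z2) := by
        rw [hpiece, if_pos h2]
      obtain ⟨k1, b1⟩ := z1
      obtain ⟨k2, b2⟩ := z2
      simp only at hk
      subst hk
      cases b1 <;> cases b2
      · exact absurd rfl hbne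
      · refine measure_mono_null (inter_subset_inter hs1 hs2) ?_
        rw [inter_comm]
        simp only [hlep, hrep, if_pos, if_neg, Bool.false_eq_true, if_false, if_true]
        exact null_Icc_inter (le_refl _)
      · refine measure_mono_null (inter_subset_inter hs1 hs2) ?_
        simp only [hlep, hrep, Bool.false_eq_true, if_false, if_true]
        exact null_Icc_inter (le_refl _)
      · exact absurd rfl hbne
    · exact measure_mono_null
        (inter_subset_inter (hpsubcell i z1) (hpsubcell j z2)) (hcellnull _ _ hk)
  have hCi : ∀ i, C i = ⋃ z : Fin M × Bool, Icc (aa i z) (bb i z) := fun i => by rw [hCdef]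
  have hCfin : ∀ i, FinUnionIcc (C i) := fun i => by
    rw [hCi]; exact finUnionIcc_of_fintype _ _
  have howA : ∀ k : Fin M, ow (k, true) = oA k := fun k => by simp [how]
  have howB : ∀ k : Fin M, ow (k, false) = oB k := fun k => by simp [how]
  have hlepA : ∀ k : Fin M, lep (k, true) = q k.castSucc := fun k => by simp [hlep]
  have hrepA : ∀ k : Fin M, rep (k, true) = r k := fun k => by simp [hrep]
  have hlepB : ∀ k : Fin M, lep (k, false) = r k := fun k => by simp [hlep]
  have hrepB : ∀ k : Fin M, rep (k, false) = q k.succ := fun k => by simp [hrep]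
  have hCcomp : CompleteAlloc C := by
    apply Subset.antisymm
    · exact iUnion_subset hCsub
    · intro x hx
      have hx' : x ∈ ⋃ k : Fin M, Icc (q k.castSucc) (q k.succ) := by
        rw [iUnion_cells hM hmono.monotone, hq0, hq1]; exact hx
      obtain ⟨k, hk⟩ := mem_iUnion.1 hx'
      by_cases hxr : x ≤ r k
      · refine mem_iUnion.2 ⟨oA k, ?_⟩
        rw [hCi]
        refine mem_iUnion.2 ⟨(k, true), ?_⟩
        rw [hpiece, if_pos (howA k), hlepA, hrepA]
        exact ⟨hk.1, hxr⟩
      · refine mem_iUnion.2 ⟨oB k, ?_⟩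
        rw [hCi]
        refine mem_iUnion.2 ⟨(k, false), ?_⟩
        rw [hpiece, if_pos (howB k), hlepB, hrepB]
        exact ⟨(not_le.1 hxr).le, hk.2⟩
  refine ⟨C, ⟨hCsub, hCfin, hCpair⟩, hCcomp, ?_⟩
  intro i
  have hAmeas : ∀ j, MeasurableSet (A j) := fun j => finUnionIcc_measurable (hAfin j)
  have hBmeas : ∀ j, MeasurableSet (B j) := fun j => finUnionIcc_measurable (hBfin j)
  have hvalA := alloc_value hmono hq0 hq1 (hf i) (hc i) hAmeas hAsub hApair hoA i
  have hvalB := alloc_value hmono hq0 hq1 (hf i) (hc i) hBmeas hBsub hBpair hoB i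
  rw [cakeval, sum_cells hmono hq0 hq1 (hCmeas i) (hCsub i)
    (pc_integrableOn (hf i) (hCsub i))]
  have hterm : ∀ k : Fin M, ∫ x in C i ∩ Ico (q k.castSucc) (q k.succ), f i x
      = (1-t) * (if oA k = i then c i k * (q k.succ - q k.castSucc) else 0)
        + t * (if oB k = i then c i k * (q k.succ - q k.castSucc) else 0) := by
    intro k
    have hcs : q k.castSucc < q k.succ := hcell k
    have hrl := hrlow k
    have hrh := hrhigh k
    set T0 : Set ℝ := (Icc (aa i (k,true)) (bb i (k,true)) ∪
      Icc (aa i (k,false)) (bb i (k,false))) ∩ Ico (q k.castSucc) (q k.succ) with hT0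
    have hsubT0 : T0 ⊆ C i ∩ Ico (q k.castSucc) (q k.succ) := by
      refine inter_subset_inter ?_ (fun x hx => hx)
      rw [hCi]
      exact union_subset (subset_iUnion (fun z => Icc (aa i z) (bb i z)) (k, true))
        (subset_iUnion (fun z => Icc (aa i z) (bb i z)) (k, false))
    have hae : ((C i ∩ Ico (q k.castSucc) (q k.succ) : Set ℝ)) =ᵐ[volume] T0 := by
      rw [MeasureTheory.ae_eq_set]
      constructor
      · refine measure_mono_null ?_ (Real.volume_singleton (a := q k.castSucc))
        rintro x ⟨⟨hxC, hxI⟩, hxT⟩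
        rw [hCi] at hxC
        obtain ⟨z, hz⟩ := mem_iUnion.1 hxC
        by_cases hzk : z.1 = k
        · exfalso
          apply hxT
          obtain ⟨k', b⟩ := z
          simp only at hzk
          subst hzk
          refine ⟨?_, hxI⟩
          cases b
          · exact Or.inr hz
          · exact Or.inl hz
        · have h1 := hpsubcell i z hz
          rcases lt_or_gt_of_ne hzk with h | h
          · have hle : x ≤ q k.castSucc :=
              le_trans h1.2 (hmono.monotone (fin_succ_le_castSucc h))
            exact le_antisymm hle hxI.1
          · exfalso
            have hge : q k.succ ≤ x :=
              le_trans (hmono.monotone (fin_succ_le_castSucc h)) h1.1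
            exact absurd hxI.2 (not_lt.2 hge)
      · exact measure_mono_null (fun x hx => (hx.2 (hsubT0 hx.1)).elim) measure_empty
    rw [setIntegral_congr_set hae]
    by_cases h1 : oA k = i <;> by_cases h2 : oB k = i
    · rw [if_pos h1, if_pos h2]
      have hT0eq : T0 = Ico (q k.castSucc) (q k.succ) := by
        rw [hT0, hpiece, hpiece, if_pos (h1 ▸ howA k), if_pos (h2 ▸ howB k),
          hlepA, hrepA, hlepB, hrepB, Icc_union_Icc_eq_Icc hrl hrh,
          inter_eq_self_of_subset_right Ico_subset_Icc_self]
      rw [hT0eq, integral_const_between hcs.le Ioo_subset_Ico_self Ico_subset_Icc_self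
        (fun x hx => hc i k x (Ioo_subset_Ico_self hx))]
      ring
    · rw [if_pos h1, if_neg h2]
      have hT0eq : T0 = Icc (q k.castSucc) (r k) ∩ Ico (q k.castSucc) (q k.succ) := by
        rw [hT0, hpiece, hpiece, if_pos (h1 ▸ howA k), if_neg (fun hh => h2 ((howB k) ▸ hh)),
          hlepA, hrepA, union_empty]
      have hss : Ioo (q k.castSucc) (r k) ⊆
          Icc (q k.castSucc) (r k) ∩ Ico (q k.castSucc) (q k.succ) :=
        fun x hx => ⟨⟨hx.1.le, hx.2.le⟩, ⟨hx.1.le, lt_of_lt_of_le hx.2 hrh⟩⟩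
      rw [hT0eq, integral_const_between hrl hss inter_subset_left
        (fun x hx => hc i k x ⟨hx.1.le, lt_of_lt_of_le hx.2 hrh⟩)]
      rw [hrdef]
      ring
    · rw [if_neg h1, if_pos h2]
      have hT0eq : T0 = Icc (r k) (q k.succ) ∩ Ico (q k.castSucc) (q k.succ) := by
        rw [hT0, hpiece, hpiece, if_neg (fun hh => h1 ((howA k) ▸ hh)), if_pos (h2 ▸ howB k),
          hlepB, hrepB, empty_union]
      have hss : Ioo (r k) (q k.succ) ⊆
          Icc (r k) (q k.succ) ∩ Ico (q k.castSucc) (q k.succ) :=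
        fun x hx => ⟨⟨hx.1.le, hx.2.le⟩, ⟨le_trans hrl hx.1.le, hx.2⟩⟩
      rw [hT0eq, integral_const_between hrh hss inter_subset_left
        (fun x hx => hc i k x ⟨le_trans hrl hx.1.le, hx.2⟩)]
      rw [hrdef]
      ring
    · rw [if_neg h1, if_neg h2]
      have hT0eq : T0 = (∅ : Set ℝ) := by
        rw [hT0, hpiece, hpiece, if_neg (fun hh => h1 ((howA k) ▸ hh)),
          if_neg (fun hh => h2 ((howB k) ▸ hh)), union_empty, empty_inter]
      rw [hT0eq]
      simp
  rw [Finset.sum_congr rfl (fun k _ => hterm k), Finset.sum_add_distrib,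
    ← Finset.mul_sum, ← Finset.mul_sum, ← hvalA, ← hvalB]
lemma cells_inter_null {M : ℕ} {q : Fin (M+1) → ℝ} (hmono : Monotone q)
    {k k' : Fin M} (h : k ≠ k') :
    volume (Icc (q k.castSucc) (q k.succ) ∩ Icc (q k'.castSucc) (q k'.succ)) = 0 := by
  rcases lt_or_gt_of_ne h with h' | h'
  · exact null_Icc_inter (hmono (fin_succ_le_castSucc h'))
  · rw [inter_comm]
    exact null_Icc_inter (hmono (fin_succ_le_castSucc h'))

lemma exists_pos_alloc {N : ℕ} (hN : 0 < N) {f : Fin N → ℝ → ℝ}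
    (hf : ∀ i, ValidDensity (f i)) :
    ∃ B : Fin N → Set ℝ, IsAlloc B ∧ CompleteAlloc B ∧ ∀ i, 0 < cakeval (f i) (B i) := by
  classical
  choose Ef hEf using fun i => pc_exists_finset (hf i).1
  set G : Finset ℝ := insert 0 (insert 1
    ((Finset.univ.biUnion fun i => Ef i).filter (fun x => x ∈ Icc (0:ℝ) 1))) with hG
  have h0G : (0:ℝ) ∈ G := Finset.mem_insert_self _ _
  have h1G : (1:ℝ) ∈ G := Finset.mem_insert_of_mem (Finset.mem_insert_self _ _)
  have hGsub : ∀ g ∈ G, g ∈ Icc (0:ℝ) 1 := by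
    intro g hg
    rw [hG] at hg
    rcases Finset.mem_insert.1 hg with rfl | hg
    · exact ⟨le_refl 0, zero_le_one⟩
    rcases Finset.mem_insert.1 hg with rfl | hg
    · exact ⟨zero_le_one, le_refl 1⟩
    · exact (Finset.mem_filter.1 hg).2
  obtain ⟨M, q, hM, hmono, hq0, hq1, hqmem, hqavoid⟩ := grid_exists G h0G h1G hGsub
  have hq01 : ∀ j, q j ∈ Icc (0:ℝ) 1 := fun j => hGsub _ (hqmem j)
  have hcell : ∀ k : Fin M, q k.castSucc < q k.succ := fun k => hmono (Fin.castSucc_lt_succ (i := k))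
  have hconst : ∀ i (k : Fin M), ∃ cc, ∀ x ∈ Ico (q k.castSucc) (q k.succ), f i x = cc := by
    intro i k
    refine hEf i _ _ (hq01 k.castSucc).1 (hcell k) (hq01 k.succ).2 fun e he hmem => ?_
    have he01 : e ∈ Icc (0:ℝ) 1 :=
      ⟨le_trans (hq01 k.castSucc).1 hmem.1.le, le_trans hmem.2.le (hq01 k.succ).2⟩
    have heG : e ∈ G := by
      rw [hG]
      refine Finset.mem_insert_of_mem (Finset.mem_insert_of_mem ?_)
      exact Finset.mem_filter.2 ⟨Finset.mem_biUnion.2 ⟨i, Finset.mem_univ i, he⟩, he01⟩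
    exact hqavoid e heG k hmem
  choose c hc using hconst
  have hcellsub : ∀ k : Fin M, Ico (q k.castSucc) (q k.succ) ⊆ Icc (0:ℝ) 1 := fun k x hx =>
    ⟨le_trans (hq01 k.castSucc).1 hx.1, le_trans hx.2.le (hq01 k.succ).2⟩
  have htot : ∀ i, cakeval (f i) (Icc 0 1)
      = ∑ k : Fin M, c i k * (q k.succ - q k.castSucc) := by
    intro i
    rw [cakeval, sum_cells hmono hq0 hq1 measurableSet_Icc (fun x hx => hx)
      (pc_integrableOn (hf i).1 (fun x hx => hx))]
    refine Finset.sum_congr rfl fun k _ => ?_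
    rw [inter_eq_self_of_subset_right (hcellsub k)]
    exact integral_const_between (hcell k).le Ioo_subset_Ico_self Ico_subset_Icc_self
      (fun x hx => hc i k x (Ioo_subset_Ico_self hx))
  have hkk : ∀ i, ∃ k : Fin M, 0 < c i k * (q k.succ - q k.castSucc) := by
    intro i
    by_contra h
    push_neg at h
    have hle : ∑ k : Fin M, c i k * (q k.succ - q k.castSucc) ≤ 0 :=
      Finset.sum_nonpos fun k _ => h k
    have hpos := (hf i).2.2
    rw [htot i] at hpos
    linarith
  choose kk hkkpos using hkk
  have hNpos : (0:ℝ) < N := by exact_mod_cast hN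
  set g : Fin M → Fin (N+1) → ℝ := fun k s =>
    q k.castSucc + (s:ℝ) * (q k.succ - q k.castSucc) / N with hgdef
  have hgmono : ∀ k, Monotone (g k) := by
    intro k s1 s2 hs
    simp only [hgdef]
    have hlen : (0:ℝ) ≤ q k.succ - q k.castSucc := by linarith [hcell k]
    have hcast : (s1:ℝ) ≤ (s2:ℝ) := by exact_mod_cast hs
    have h2 : (s1:ℝ) * (q k.succ - q k.castSucc) ≤ (s2:ℝ) * (q k.succ - q k.castSucc) :=
      mul_le_mul_of_nonneg_right hcast hlen
    have h3 := (div_le_div_iff_of_pos_right hNpos).2 h2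
    linarith
  have hg0 : ∀ k, g k 0 = q k.castSucc := by
    intro k; simp [hgdef]
  have hglast : ∀ k, g k (Fin.last N) = q k.succ := by
    intro k
    simp only [hgdef, Fin.val_last]
    have hNne : (N:ℝ) ≠ 0 := ne_of_gt hNpos
    field_simp
    ring
  have hgsub : ∀ (k : Fin M) (s : Fin N),
      Icc (g k s.castSucc) (g k s.succ) ⊆ Icc (q k.castSucc) (q k.succ) := by
    intro k s
    apply Icc_subset_Icc
    · rw [← hg0 k]; exact hgmono k (Fin.zero_le _)
    · rw [← hglast k]; exact hgmono k (Fin.le_last _)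
  have hcellcover : ∀ k : Fin M, Icc (q k.castSucc) (q k.succ)
      = ⋃ s : Fin N, Icc (g k s.castSucc) (g k s.succ) := by
    intro k; rw [iUnion_cells hN (hgmono k), hg0, hglast]
  set j0 : Fin N := ⟨0, hN⟩ with hj0
  set own : Fin M × Fin N → Fin N := fun z => if z.1 = kk z.2 then z.2 else j0 with hown
  set ba : Fin N → Fin M × Fin N → ℝ :=
    fun j z => if own z = j then g z.1 z.2.castSucc else 1 with hba
  set bc : Fin N → Fin M × Fin N → ℝ :=
    fun j z => if own z = j then g z.1 z.2.succ else 0 with hbc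
  set B : Fin N → Set ℝ := fun j => ⋃ z, Icc (ba j z) (bc j z) with hB
  have hpiece : ∀ j z, Icc (ba j z) (bc j z) =
      if own z = j then Icc (g z.1 z.2.castSucc) (g z.1 z.2.succ) else (∅ : Set ℝ) := by
    intro j z
    by_cases h : own z = j <;>
      simp [hba, hbc, h, Set.Icc_eq_empty (by norm_num : ¬(1:ℝ) ≤ 0)]
  have hpsub : ∀ j z, Icc (ba j z) (bc j z) ⊆ Icc (q z.1.castSucc) (q z.1.succ) := by
    intro j z
    rw [hpiece]
    by_cases h : own z = j <;> simp [h]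
    exact hgsub z.1 z.2
  have hBsub : ∀ j, B j ⊆ Icc (0:ℝ) 1 := fun j => by
    rw [hB]
    exact iUnion_subset fun z => (hpsub j z).trans (Icc_subset_Icc (hq01 _).1 (hq01 _).2)
  have hBfin : ∀ j, FinUnionIcc (B j) := fun j => by
    rw [hB]; exact finUnionIcc_of_fintype _ _
  have hBpair : Pairwise fun j j' => volume (B j ∩ B j') = 0 := by
    intro j j' hjj
    have hsubU : B j ∩ B j' ⊆ ⋃ zz : (Fin M × Fin N) × (Fin M × Fin N),
        Icc (ba j zz.1) (bc j zz.1) ∩ Icc (ba j' zz.2) (bc j' zz.2) := by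
      rintro x ⟨hxj, hxj'⟩
      rw [hB] at hxj hxj'
      obtain ⟨z1, hz1⟩ := mem_iUnion.1 hxj
      obtain ⟨z2, hz2⟩ := mem_iUnion.1 hxj'
      exact mem_iUnion.2 ⟨(z1, z2), hz1, hz2⟩
    refine measure_mono_null hsubU (measure_iUnion_null fun zz => ?_)
    obtain ⟨z1, z2⟩ := zz
    by_cases h1 : own z1 = j
    swap
    · rw [hpiece, if_neg h1]; simp
    by_cases h2 : own z2 = j'
    swap
    · rw [hpiece j z1, hpiece j' z2, if_neg h2]; simp
    by_cases hk : z1.1 = z2.1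
    · have hsne : z1.2 ≠ z2.2 := by
        intro hb
        have hz12 : z1 = z2 := Prod.ext hk hb
        exact hjj (by rw [← h1, ← h2, hz12])
      rw [hpiece, if_pos h1, hpiece, if_pos h2]
      obtain ⟨k1, s1⟩ := z1
      obtain ⟨k2, s2⟩ := z2
      simp only at hk hsne
      subst hk
      rcases lt_or_gt_of_ne hsne with h | h
      · exact null_Icc_inter ((hgmono k1) (fin_succ_le_castSucc h))
      · rw [inter_comm]
        exact null_Icc_inter ((hgmono k1) (fin_succ_le_castSucc h))
    · exact measure_mono_null (inter_subset_inter (hpsub j z1) (hpsub j' z2))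
        (cells_inter_null hmono.monotone hk)
  have hBcomp : CompleteAlloc B := by
    apply Subset.antisymm
    · exact iUnion_subset hBsub
    · intro x hx
      have hx' : x ∈ ⋃ k : Fin M, Icc (q k.castSucc) (q k.succ) := by
        rw [iUnion_cells hM hmono.monotone, hq0, hq1]; exact hx
      obtain ⟨k, hk⟩ := mem_iUnion.1 hx'
      rw [hcellcover k] at hk
      obtain ⟨s, hs⟩ := mem_iUnion.1 hk
      refine mem_iUnion.2 ⟨own (k, s), ?_⟩
      rw [hB]
      exact mem_iUnion.2 ⟨(k, s), by rw [hpiece, if_pos rfl]; exact hs⟩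
  have hval : ∀ j, 0 < cakeval (f j) (B j) := by
    intro j
    have hoz : own (kk j, j) = j := by rw [hown]; simp
    have hsubpiece : Icc (g (kk j) j.castSucc) (g (kk j) j.succ) ⊆ B j := by
      rw [hB]
      refine subset_trans (by rw [hpiece, if_pos hoz])
        (subset_iUnion (fun z => Icc (ba j z) (bc j z)) (kk j, j))
    have hlen : g (kk j) j.succ - g (kk j) j.castSucc
        = (q (kk j).succ - q (kk j).castSucc)/N := by
      simp only [hgdef, Fin.val_succ, Fin.coe_castSucc]
      push_cast
      field_simp
      ring
    have hintpiece : ∫ x in Icc (g (kk j) j.castSucc) (g (kk j) j.succ), f j x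
        = c j (kk j) * ((q (kk j).succ - q (kk j).castSucc)/N) := by
      rw [← hlen]
      refine integral_const_between (hgmono _ (Fin.castSucc_lt_succ (i := j)).le)
        Ioo_subset_Icc_self (fun x hx => hx) (fun x hx => hc j (kk j) x ?_)
      constructor
      · exact le_trans (by rw [← hg0 (kk j)]; exact hgmono _ (Fin.zero_le _)) hx.1.le
      · exact lt_of_lt_of_le hx.2 (by rw [← hglast (kk j)]; exact hgmono _ (Fin.le_last _))
    have hpospiece : 0 < c j (kk j) * ((q (kk j).succ - q (kk j).castSucc)/N) := by
      have h1 : 0 < (c j (kk j) * (q (kk j).succ - q (kk j).castSucc))/N :=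
        div_pos (hkkpos j) hNpos
      have h2 : c j (kk j) * ((q (kk j).succ - q (kk j).castSucc)/N)
          = (c j (kk j) * (q (kk j).succ - q (kk j).castSucc))/N := by ring
      rw [h2]; exact h1
    have hmono2 : ∫ x in Icc (g (kk j) j.castSucc) (g (kk j) j.succ), f j x
        ≤ cakeval (f j) (B j) := by
      rw [cakeval]
      exact setIntegral_mono_set (pc_integrableOn (hf j).1 (hBsub j))
        (Filter.Eventually.of_forall fun x => (hf j).2.1 x)
        (HasSubset.Subset.eventuallyLE hsubpiece)
    rw [hintpiece] at hmono2
    linarith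
  exact ⟨B, ⟨hBsub, hBfin, hBpair⟩, hBcomp, hval⟩
lemma mnw_pos {N : ℕ} (hN : 0 < N) {f : Fin N → ℝ → ℝ} (hf : ∀ i, ValidDensity (f i))
    {A : Fin N → Set ℝ} (hA : IsCompleteMNW f A) : ∀ i, 0 < cakeval (f i) (A i) := by
  obtain ⟨B, hB, hBc, hBpos⟩ := exists_pos_alloc hN hf
  have h1 : 0 < nashProd f B := Finset.prod_pos fun i _ => hBpos i
  have h2 := hA.2.2 B hB hBc
  intro i
  by_contra h
  push_neg at h
  have hz : cakeval (f i) (A i) = 0 :=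
    le_antisymm h (cakeval_nonneg (hf i).2.1 (finUnionIcc_measurable (hA.1.2.1 i)))
  have h0 : nashProd f A = 0 := Finset.prod_eq_zero (Finset.mem_univ i) hz
  rw [h0] at h2
  linarith

lemma mnw_sum_ratio {N : ℕ} (hN : 0 < N) {f : Fin N → ℝ → ℝ}
    (hf : ∀ i, ValidDensity (f i))
    {A : Fin N → Set ℝ} (hA : IsCompleteMNW f A)
    {B : Fin N → Set ℝ} (hB : IsAlloc B) (hBc : CompleteAlloc B) :
    ∑ i, cakeval (f i) (B i) / cakeval (f i) (A i) ≤ N := by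
  classical
  set a : Fin N → ℝ := fun i => cakeval (f i) (A i) with ha
  set b : Fin N → ℝ := fun i => cakeval (f i) (B i) with hb
  have hapos : ∀ i, 0 < a i := mnw_pos hN hf hA
  have hkey : ∀ t : ℝ, 0 ≤ t → t ≤ 1 → ∏ i, (a i + t * (b i - a i)) ≤ ∏ i, a i := by
    intro t h0 h1
    obtain ⟨C, hC, hCc, hCval⟩ :=
      exists_interpolation (fun i => (hf i).1) hA.1 hA.2.1 hB hBc h0 h1
    have hle := hA.2.2 C hC hCc
    rw [nashProd, nashProd] at hle
    calc ∏ i, (a i + t * (b i - a i)) = ∏ i, cakeval (f i) (C i) := by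
          refine Finset.prod_congr rfl fun i _ => ?_
          rw [hCval i, ha, hb]; ring
      _ ≤ ∏ i, a i := hle
  set g : ℝ → ℝ := fun t => ∏ i, (a i + t * (b i - a i)) with hg
  have hder : HasDerivAt g
      (∑ i, (∏ j ∈ Finset.univ.erase i, a j) * (b i - a i)) 0 := by
    have hstep : ∀ i ∈ Finset.univ, HasDerivAt
        (fun t : ℝ => a i + t * (b i - a i)) (b i - a i) 0 := by
      intro i _
      simpa using ((hasDerivAt_id (0:ℝ)).mul_const (b i - a i)).const_add (a i)
    have h := HasDerivAt.fun_finsetProd hstep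
    refine h.congr_deriv (Eq.symm ?_)
    refine Finset.sum_congr rfl fun i _ => ?_
    rw [smul_eq_mul]
    congr 1
    refine Finset.prod_congr rfl fun j _ => ?_
    ring
  have hD : (∑ i, (∏ j ∈ Finset.univ.erase i, a j) * (b i - a i)) ≤ 0 := by
    have hslope := hasDerivAt_iff_tendsto_slope.1 hder
    have hsub : (Set.Ioi (0:ℝ)) ⊆ {(0:ℝ)}ᶜ := fun x hx => ne_of_gt hx
    have hslope' := hslope.mono_left (nhdsWithin_mono 0 hsub)
    refine le_of_tendsto hslope' ?_
    have hIoc : Set.Ioc (0:ℝ) 1 ∈ nhdsWithin (0:ℝ) (Set.Ioi 0) :=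
      Ioc_mem_nhdsGT_of_mem ⟨le_refl 0, zero_lt_one⟩
    filter_upwards [hIoc] with t ht
    rw [slope_def_field]
    have hg0 : g 0 = ∏ i, a i := by
      rw [hg]; refine Finset.prod_congr rfl fun i _ => by ring
    have hgt : g t ≤ ∏ i, a i := hkey t ht.1.le ht.2
    rw [hg0]
    apply div_nonpos_of_nonpos_of_nonneg
    · linarith
    · linarith [ht.1]
  have hprodpos : 0 < ∏ i, a i := Finset.prod_pos fun i _ => hapos i
  have heq : ∀ i : Fin N, (∏ j ∈ Finset.univ.erase i, a j) * (b i - a i)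
      = (b i / a i - 1) * ∏ j, a j := by
    intro i
    have hpe := Finset.prod_erase_mul Finset.univ a (Finset.mem_univ i)
    have hne := ne_of_gt (hapos i)
    field_simp
    linear_combination (b i - a i) * hpe
  have hsum : (∑ i, (b i / a i - 1)) * ∏ j, a j ≤ 0 := by
    rw [Finset.sum_mul]
    rw [Finset.sum_congr rfl fun i _ => (heq i).symm]
    exact hD
  have hsum2 : ∑ i, (b i / a i - 1) ≤ 0 := by
    by_contra hcon
    push_neg at hcon
    nlinarith
  have hcount : ∑ i : Fin N, (1:ℝ) = N := by simp
  calc ∑ i, b i / a i = ∑ i, ((b i / a i - 1) + 1) := by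
        refine Finset.sum_congr rfl fun i _ => by ring
    _ = (∑ i, (b i / a i - 1)) + N := by rw [Finset.sum_add_distrib, hcount]
    _ ≤ N := by linarith
/-- Upper bound of Theorem 3.1: the incentive ratio of the MNW mechanism without
free disposal is at most 2.  Agent 1 is represented by index `0 : Fin (n + 1)`. -/
theorem mnw_incentive_ratio_upper (n : ℕ) (f : Fin (n + 1) → ℝ → ℝ) (f1' : ℝ → ℝ)
    (hf : ∀ i, ValidDensity (f i)) (hf1' : ValidDensity f1')
    (A A' : Fin (n + 1) → Set ℝ)
    (hA : IsCompleteMNW f A)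
    (hA' : IsCompleteMNW (Function.update f 0 f1') A') :
    cakeval (f 0) (A' 0) ≤ 2 * cakeval (f 0) (A 0) := by
  classical
  set f' : Fin (n+1) → ℝ → ℝ := Function.update f 0 f1' with hf'def
  have hf'valid : ∀ i, ValidDensity (f' i) := by
    intro i
    by_cases h : i = 0
    · subst h
      rw [hf'def, Function.update_self]
      exact hf1'
    · rw [hf'def, Function.update_of_ne h]
      exact hf i
  have hN : 0 < n + 1 := Nat.succ_pos n
  set a : Fin (n+1) → ℝ := fun i => cakeval (f i) (A i) with ha
  set b : Fin (n+1) → ℝ := fun i => cakeval (f i) (A' i) with hb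
  have hapos : ∀ i, 0 < a i := mnw_pos hN hf hA
  have ha'pos : ∀ i, 0 < cakeval (f' i) (A' i) := mnw_pos hN hf'valid hA'
  have hbpos : ∀ j : Fin (n+1), j ≠ 0 → 0 < b j := by
    intro j hj
    have h := ha'pos j
    rwa [hf'def, Function.update_of_ne hj] at h
  have hsum1 : ∑ i, b i / a i ≤ ((n+1 : ℕ) : ℝ) :=
    mnw_sum_ratio hN hf hA hA'.1 hA'.2.1
  have hsum2 : ∑ i, cakeval (f' i) (A i) / cakeval (f' i) (A' i) ≤ ((n+1 : ℕ) : ℝ) :=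
    mnw_sum_ratio hN hf'valid hA' hA.1 hA.2.1
  set s : Finset (Fin (n+1)) := Finset.univ.erase 0 with hs
  have hcard : (s.card : ℝ) = n := by
    rw [hs, Finset.card_erase_of_mem (Finset.mem_univ _)]
    simp
  -- split the first sum
  have hsplit1 : b 0 / a 0 + ∑ j ∈ s, b j / a j ≤ (n : ℝ) + 1 := by
    have := Finset.add_sum_erase Finset.univ (fun i => b i / a i) (Finset.mem_univ 0)
    rw [hs]
    push_cast at hsum1
    linarith [this ▸ hsum1]
  -- split the second sum
  have hsplit2 : ∑ j ∈ s, a j / b j ≤ (n : ℝ) + 1 := by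
    have hterm0 : 0 ≤ cakeval (f' 0) (A 0) / cakeval (f' 0) (A' 0) := by
      apply div_nonneg _ (ha'pos 0).le
      rw [hf'def, Function.update_self]
      exact cakeval_nonneg hf1'.2.1 (finUnionIcc_measurable (hA.1.2.1 0))
    have hcongr : ∀ j ∈ s, cakeval (f' j) (A j) / cakeval (f' j) (A' j) = a j / b j := by
      intro j hj
      have hj0 : j ≠ 0 := (Finset.mem_erase.1 hj).1
      rw [hf'def, Function.update_of_ne hj0, ha, hb]
    have hadd := Finset.add_sum_erase Finset.univ
      (fun i => cakeval (f' i) (A i) / cakeval (f' i) (A' i)) (Finset.mem_univ 0)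
    rw [← Finset.sum_congr rfl hcongr]
    push_cast at hsum2
    linarith [hadd ▸ hsum2]
  -- Cauchy–Schwarz
  set S1 : ℝ := ∑ j ∈ s, b j / a j with hS1
  set S2 : ℝ := ∑ j ∈ s, a j / b j with hS2
  have hxpos : ∀ j ∈ s, 0 < b j / a j := fun j hj =>
    div_pos (hbpos j (Finset.mem_erase.1 hj).1) (hapos j)
  have hypos : ∀ j ∈ s, 0 < a j / b j := fun j hj =>
    div_pos (hapos j) (hbpos j (Finset.mem_erase.1 hj).1)
  have hCS : ((n : ℝ)) ^ 2 ≤ S1 * S2 := by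
    have h := Finset.sum_mul_sq_le_sq_mul_sq s
      (fun j => Real.sqrt (b j / a j)) (fun j => Real.sqrt (a j / b j))
    have h1 : ∀ j ∈ s, Real.sqrt (b j / a j) * Real.sqrt (a j / b j) = 1 := by
      intro j hj
      rw [← Real.sqrt_mul (hxpos j hj).le]
      have : b j / a j * (a j / b j) = 1 := by
        have hbne := (hbpos j (Finset.mem_erase.1 hj).1).ne'
        have hane := (hapos j).ne'
        field_simp
      rw [this, Real.sqrt_one]
    have h2 : ∀ j ∈ s, Real.sqrt (b j / a j) ^ 2 = b j / a j := fun j hj =>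
      Real.sq_sqrt (hxpos j hj).le
    have h3 : ∀ j ∈ s, Real.sqrt (a j / b j) ^ 2 = a j / b j := fun j hj =>
      Real.sq_sqrt (hypos j hj).le
    rw [Finset.sum_congr rfl h1, Finset.sum_congr rfl h2, Finset.sum_congr rfl h3] at h
    simpa [hcard] using h
  have hS1nonneg : 0 ≤ S1 := Finset.sum_nonneg fun j hj => (hxpos j hj).le
  have hfinal : b 0 / a 0 ≤ 2 := by
    have hup : S1 * S2 ≤ S1 * ((n:ℝ) + 1) :=
      mul_le_mul_of_nonneg_left hsplit2 hS1nonneg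
    have hnpos : (0:ℝ) < (n:ℝ) + 1 := by positivity
    nlinarith
  rw [ha, hb] at hfinal
  have := (div_le_iff₀ (hapos 0)).1 hfinal
  rw [ha] at this
  linarith [this]
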